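/- If R → S is a pure ring homomorphism and S is a splinter, then R is a splinter. -/

import Mathlib

universe u

open TensorProduct

set_option maxHeartbeats 2000000
set_option synthInstance.maxHeartbeats 400000

section Surj
variable (R S T : Type u) [CommRing R] [CommRing S] [CommRing T]
  [Algebra R S] [Algebra R T]

lemma comap_surj_baseChange
    (hsurj : Function.Surjective (PrimeSpectrum.comap (algebraMap R T))) :
    Function.Surjective (PrimeSpectrum.comap (algebraMap S (S ⊗[R] T))) := by
  intro q
  set p : PrimeSpectrum R := PrimeSpectrum.comap (algebraMap R S) q with hp
  obtain ⟨p', hp'⟩ := hsurj p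
  haveI := q.2
  haveI := p.2
  haveI := p'.2
  set κ := FractionRing (S ⧸ q.asIdeal) with hκdef
  set F := FractionRing (R ⧸ p.asIdeal) with hFdef
  set L := FractionRing (T ⧸ p'.asIdeal) with hLdef
  have hle : p.asIdeal ≤ q.asIdeal.comap (algebraMap R S) := le_of_eq rfl
  have hle' : p.asIdeal ≤ p'.asIdeal.comap (algebraMap R T) := by
    rw [← hp']; exact le_rfl
  set gS : R ⧸ p.asIdeal →+* S ⧸ q.asIdeal :=
    Ideal.quotientMap q.asIdeal (algebraMap R S) hle with hgS
  set gT : R ⧸ p.asIdeal →+* T ⧸ p'.asIdeal :=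
    Ideal.quotientMap p'.asIdeal (algebraMap R T) hle' with hgT
  have hgSinj : Function.Injective gS := Ideal.quotientMap_injective' (le_of_eq rfl)
  have hgTinj : Function.Injective gT :=
    Ideal.quotientMap_injective' (by rw [← hp']; exact le_rfl)
  have hκinj : Function.Injective ((algebraMap (S ⧸ q.asIdeal) κ).comp gS) :=
    (IsFractionRing.injective (S ⧸ q.asIdeal) κ).comp hgSinj
  have hLinj : Function.Injective ((algebraMap (T ⧸ p'.asIdeal) L).comp gT) :=
    (IsFractionRing.injective _ _).comp hgTinj
  letI : Algebra F κ := (IsFractionRing.lift hκinj).toAlgebra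
  letI : Algebra F L := (IsFractionRing.lift hLinj).toAlgebra
  haveI : IsScalarTower R F κ := IsScalarTower.of_algebraMap_eq fun r => by
    show algebraMap S κ (algebraMap R S r)
      = IsFractionRing.lift hκinj (algebraMap (R ⧸ p.asIdeal) F (Ideal.Quotient.mk _ r))
    rw [IsFractionRing.lift_algebraMap]
    show _ = algebraMap (S ⧸ q.asIdeal) κ (gS (Ideal.Quotient.mk _ r))
    rw [hgS, Ideal.quotientMap_mk]
    rfl
  haveI : Nontrivial (κ ⊗[F] L) := by
    haveI : Module.FaithfullyFlat F κ := inferInstance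
    infer_instance
  have key : ∀ x : F, (algebraMap F κ x) ⊗ₜ[F] (1:L) = (1:κ) ⊗ₜ[F] (algebraMap F L x) :=
    fun x => by
      rw [Algebra.algebraMap_eq_smul_one, Algebra.algebraMap_eq_smul_one,
        ← TensorProduct.smul_tmul', TensorProduct.tmul_smul]
  -- the R-algebra map T →ₐ[R] κ ⊗[F] L
  let gTalg : T →ₐ[R] κ ⊗[F] L :=
    { toRingHom := ((Algebra.TensorProduct.includeRight : L →ₐ[F] κ ⊗[F] L) :
        L →+* κ ⊗[F] L).comp ((algebraMap (T ⧸ p'.asIdeal) L).comp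
          (Ideal.Quotient.mk p'.asIdeal))
      commutes' := fun r => by
        show (1:κ) ⊗ₜ[F] (algebraMap (T ⧸ p'.asIdeal) L (Ideal.Quotient.mk _ (algebraMap R T r)))
          = algebraMap R (κ ⊗[F] L) r
        have h1 : Ideal.Quotient.mk p'.asIdeal (algebraMap R T r)
            = gT (Ideal.Quotient.mk p.asIdeal r) := by rw [hgT, Ideal.quotientMap_mk]
        have h2 : algebraMap R (κ ⊗[F] L) r
            = (algebraMap F κ (algebraMap R F r)) ⊗ₜ[F] 1 := by
          rw [Algebra.TensorProduct.algebraMap_apply, IsScalarTower.algebraMap_apply R F κ]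
        rw [h1, h2, key]
        congr 1
        show _ = IsFractionRing.lift hLinj (algebraMap (R ⧸ p.asIdeal) F (Ideal.Quotient.mk _ r))
        rw [IsFractionRing.lift_algebraMap]
        rfl }
  let fκ : κ →ₐ[R] κ ⊗[F] L := Algebra.TensorProduct.includeLeft
  have hom : κ ⊗[R] T →+* κ ⊗[F] L :=
    (Algebra.TensorProduct.lift fκ gTalg (fun _ _ => Commute.all _ _)).toRingHom
  haveI : Nontrivial (κ ⊗[R] T) := hom.domain_nontrivial
  obtain ⟨P⟩ : Nonempty (PrimeSpectrum (κ ⊗[R] T)) := inferInstance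
  let Ψ : S ⊗[R] T →ₐ[R] κ ⊗[R] T :=
    Algebra.TensorProduct.map (IsScalarTower.toAlgHom R S κ) (AlgHom.id R T)
  refine ⟨PrimeSpectrum.comap Ψ.toRingHom P, ?_⟩
  haveI := P.2
  ext s
  show Ψ (algebraMap S (S ⊗[R] T) s) ∈ P.asIdeal ↔ s ∈ q.asIdeal
  have hΨ : Ψ (algebraMap S (S ⊗[R] T) s) = (algebraMap S κ s) ⊗ₜ[R] (1:T) := by
    rw [Algebra.TensorProduct.algebraMap_apply, Algebra.TensorProduct.map_tmul]
    rfl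
  rw [hΨ]
  constructor
  · intro hmem
    by_contra hs
    have hne : algebraMap S κ s ≠ 0 := by
      show algebraMap (S ⧸ q.asIdeal) κ (Ideal.Quotient.mk _ s) ≠ 0
      intro h
      exact hs (Ideal.Quotient.eq_zero_iff_mem.mp
        (IsFractionRing.injective (S ⧸ q.asIdeal) κ (by rw [h, map_zero])))
    have hu : IsUnit ((algebraMap S κ s) ⊗ₜ[R] (1:T)) :=
      (isUnit_iff_ne_zero.mpr hne).map
        (Algebra.TensorProduct.includeLeftRingHom : κ →+* κ ⊗[R] T)
    exact P.2.ne_top (Ideal.eq_top_of_isUnit_mem _ hmem hu)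
  · intro hs
    have h0 : algebraMap S κ s = 0 := by
      show algebraMap (S ⧸ q.asIdeal) κ (Ideal.Quotient.mk _ s) = 0
      rw [Ideal.Quotient.eq_zero_iff_mem.mpr hs, map_zero]
    rw [h0, TensorProduct.zero_tmul]
    exact P.asIdeal.zero_mem
end Surj


/-- A ring `R` is a splinter if every finite ring map `R → T` inducing a surjection
on prime spectra is pure as a map of `R`-modules. -/
def IsSplinter (R : Type u) [CommRing R] : Prop :=
  ∀ (T : Type u) [CommRing T] [Algebra R T], Module.Finite R T →
    Function.Surjective (PrimeSpectrum.comap (algebraMap R T)) →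
    ∀ (P : Type u) [AddCommGroup P] [Module R P],
      Function.Injective (LinearMap.rTensor P (Algebra.linearMap R T))

/-- If `R → S` is a pure ring homomorphism and `S` is a splinter, then `R` is a
splinter. -/
theorem isSplinter_of_pure
    (R S : Type u) [CommRing R] [CommRing S] [Algebra R S]
    (hpure : ∀ (P : Type u) [AddCommGroup P] [Module R P],
      Function.Injective (LinearMap.rTensor P (Algebra.linearMap R S)))
    (hS : IsSplinter S) : IsSplinter R := by
  intro T _ _ hfin hsurj P _ _
  letI T' := S ⊗[R] T
  haveI : Module.Finite S T' := inferInstance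
  have hsurj' : Function.Surjective (PrimeSpectrum.comap (algebraMap S T')) := by
    exact comap_surj_baseChange R S T hsurj
  letI Q := S ⊗[R] P
  have hinj : Function.Injective (LinearMap.rTensor Q (Algebra.linearMap S T')) :=
    hS T' inferInstance hsurj' Q
  letI e1 := TensorProduct.lid S Q
  letI e2 := TensorProduct.AlgebraTensorModule.cancelBaseChange R S S T' P
  let i : S →ₗ[R] T' := (IsScalarTower.toAlgHom R S T').toLinearMap
  have key1 : ∀ x : S ⊗[R] P,
      e2 (LinearMap.rTensor Q (Algebra.linearMap S T') (e1.symm x))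
        = LinearMap.rTensor P i x := by
    intro x
    induction x using TensorProduct.induction_on with
    | zero => simp
    | tmul s pp =>
      rw [show e1.symm ((s ⊗ₜ[R] pp : Q)) = (1:S) ⊗ₜ[S] ((s ⊗ₜ[R] pp : Q))
          from TensorProduct.lid_symm_apply _]
      rw [LinearMap.rTensor_tmul, Algebra.linearMap_apply, map_one]
      rw [show e2 ((1:T') ⊗ₜ[S] ((s ⊗ₜ[R] pp : Q))) = (s • (1:T')) ⊗ₜ[R] pp
          from TensorProduct.AlgebraTensorModule.cancelBaseChange_tmul R S S (1:T') pp s]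
      show (s • (1:T')) ⊗ₜ[R] pp = (algebraMap S T' s) ⊗ₜ[R] pp
      rw [Algebra.algebraMap_eq_smul_one]
    | add a b ha hb => simp only [map_add, ha, hb]
  have hi : Function.Injective (LinearMap.rTensor P i) := by
    intro x y hxy
    have h1 : LinearMap.rTensor Q (Algebra.linearMap S T') (e1.symm x)
        = LinearMap.rTensor Q (Algebra.linearMap S T') (e1.symm y) :=
      e2.injective (by rw [key1, key1, hxy])
    exact e1.symm.injective (hinj h1)
  let j : T →ₗ[R] T' := (Algebra.TensorProduct.includeRight : T →ₐ[R] T').toLinearMap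
  have hcomp : j ∘ₗ Algebra.linearMap R T = i ∘ₗ Algebra.linearMap R S := by
    apply LinearMap.ext
    intro r
    show (1:S) ⊗ₜ[R] (algebraMap R T r) = (algebraMap R S r) ⊗ₜ[R] (1:T)
    rw [← Algebra.TensorProduct.algebraMap_apply', ← Algebra.TensorProduct.algebraMap_apply]
  have hcomp2 : LinearMap.rTensor P j ∘ₗ LinearMap.rTensor P (Algebra.linearMap R T)
      = LinearMap.rTensor P i ∘ₗ LinearMap.rTensor P (Algebra.linearMap R S) := by
    rw [← LinearMap.rTensor_comp, ← LinearMap.rTensor_comp, hcomp]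
  intro x y hxy
  have : LinearMap.rTensor P i (LinearMap.rTensor P (Algebra.linearMap R S) x)
      = LinearMap.rTensor P i (LinearMap.rTensor P (Algebra.linearMap R S) y) := by
    rw [← LinearMap.comp_apply, ← LinearMap.comp_apply, ← hcomp2,
      LinearMap.comp_apply, LinearMap.comp_apply, hxy]
  exact hpure P (hi this)
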